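/- Let A_I be the direct product of a family {A_i : i ∈ I} of L-partial structures over a nonempty index set I. Then A_I is a total L-structure if and only if for every relation symbol Z of L, either Z^{A_i}₀ = ∅ for every i ∈ I, or there exists k ∈ I with Z^{A_k}₊ ∪ Z^{A_k}₀ = ∅. -/

import Mathlib

set_option linter.unnecessarySimpa false

open FirstOrder FirstOrder.Language

universe u v w

/-- A partial structure for a relational language `L` on a universe `M`:
each relation symbol is interpreted by a pair of disjoint sets (the positive
and negative extensions); the undefined part is the complement of their union. -/
structure PartialStructure (L : FirstOrder.Language.{u, v}) (M : Type w) where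
  plus : ∀ {n : ℕ}, L.Relations n → Set (Fin n → M)
  minus : ∀ {n : ℕ}, L.Relations n → Set (Fin n → M)
  disjoint : ∀ {n : ℕ} (R : L.Relations n), plus R ∩ minus R = ∅

namespace PartialStructure

variable {L : FirstOrder.Language.{u, v}} {M : Type w}

/-- The undefined part `R₀` of the interpretation of a relation symbol. -/
def zero (A : PartialStructure L M) {n : ℕ} (R : L.Relations n) : Set (Fin n → M) :=
  (A.plus R ∪ A.minus R)ᶜ

/-- A partial structure is total if every relation is everywhere defined. -/
def IsTotal (A : PartialStructure L M) : Prop := ∀ {n : ℕ} (R : L.Relations n), A.zero R = ∅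

/-- `B` expands `A` (`A ⋐ B`). -/
def Expands (A B : PartialStructure L M) : Prop :=
  ∀ {n : ℕ} (R : L.Relations n), A.plus R ⊆ B.plus R ∧ A.minus R ⊆ B.minus R

/-- `B` is `A`-normal: `A ⋐ B` and `B` is total. -/
def IsNormal (A B : PartialStructure L M) : Prop := A.Expands B ∧ B.IsTotal

/-- A total partial structure for a relational language, viewed as an ordinary
first-order structure (Tarskian semantics given by the positive part). -/
def toStructure [L.IsRelational] (A : PartialStructure L M) : L.Structure M where
  funMap f := isEmptyElim f
  RelMap R x := x ∈ A.plus R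

/-- Quasi-truth: `φ` is quasi-true in `A` iff some `A`-normal structure
satisfies `φ` in the Tarskian sense. -/
def QuasiTrue [L.IsRelational] (A : PartialStructure L M) (φ : L.Sentence) : Prop :=
  ∃ B : PartialStructure L M, A.IsNormal B ∧ @Sentence.Realize L M B.toStructure φ

/-- The total structure obtained from `A` by declaring the undefined part positive. -/
def posComp (A : PartialStructure L M) : PartialStructure L M where
  plus R := A.plus R ∪ A.zero R
  minus R := A.minus R
  disjoint R := by
    rw [Set.eq_empty_iff_forall_notMem]
    rintro x ⟨hx | hx, hm⟩
    · have : x ∈ A.plus R ∩ A.minus R := ⟨hx, hm⟩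
      rw [A.disjoint R] at this
      exact this
    · exact hx (Or.inr hm)

/-- The total structure obtained from `A` by declaring the undefined part negative. -/
def negComp (A : PartialStructure L M) : PartialStructure L M where
  plus R := A.plus R
  minus R := A.minus R ∪ A.zero R
  disjoint R := by
    rw [Set.eq_empty_iff_forall_notMem]
    rintro x ⟨hx, hm | hm⟩
    · have : x ∈ A.plus R ∩ A.minus R := ⟨hx, hm⟩
      rw [A.disjoint R] at this
      exact this
    · exact hm (Or.inl hx)

/-- The direct product of a family of partial structures. -/
def directProduct {ι : Type*} {M : ι → Type*} (𝔸 : ∀ i : ι, PartialStructure L (M i)) :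
    PartialStructure L (∀ i, M i) where
  plus R := {h | ∀ i, (fun k => h k i) ∈ (𝔸 i).plus R}
  minus R := {h | ∃ i, (fun k => h k i) ∈ (𝔸 i).minus R}
  disjoint R := by
    rw [Set.eq_empty_iff_forall_notMem]
    rintro x ⟨hp, i, hm⟩
    have : (fun k => x k i) ∈ (𝔸 i).plus R ∩ (𝔸 i).minus R := ⟨hp i, hm⟩
    rw [(𝔸 i).disjoint R] at this
    exact this

end PartialStructure

/-- The equivalence relation `∼_F` induced by a filter `F` on a product `∀ i, M i`. -/
def filterSetoid {ι : Type*} (F : Filter ι) (M : ι → Type*) : Setoid (∀ i, M i) where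
  r h h' := {i | h i = h' i} ∈ F
  iseqv := by
    refine ⟨fun h => ?_, fun {h h'} hh => ?_, fun {h h' h''} h1 h2 => ?_⟩
    · simpa using F.univ_sets
    · exact Filter.mem_of_superset hh fun i hi => hi.symm
    · exact Filter.mem_of_superset (Filter.inter_mem h1 h2) fun i hi => hi.1.trans hi.2

namespace PartialStructure

variable {L : FirstOrder.Language.{u, v}}

/-- Positive part of the reduced product. -/
def rpPlus {ι : Type*} {M : ι → Type*} (F : Filter ι) (𝔸 : ∀ i : ι, PartialStructure L (M i))
    {n : ℕ} (R : L.Relations n) : Set (Fin n → Quotient (filterSetoid F M)) :=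
  {x | ∃ h : Fin n → ∀ i, M i, (∀ k, Quotient.mk (filterSetoid F M) (h k) = x k) ∧
      {i | (fun k => h k i) ∈ (𝔸 i).plus R} ∈ F}

/-- Undefined part of the reduced product. -/
def rpZero {ι : Type*} {M : ι → Type*} (F : Filter ι) (𝔸 : ∀ i : ι, PartialStructure L (M i))
    {n : ℕ} (R : L.Relations n) : Set (Fin n → Quotient (filterSetoid F M)) :=
  {x | ∃ h : Fin n → ∀ i, M i, (∀ k, Quotient.mk (filterSetoid F M) (h k) = x k) ∧
      {i | (fun k => h k i) ∈ (𝔸 i).zero R} ∈ F}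

/-- The reduced product of a family of partial structures over a filter. -/
def reducedProduct {ι : Type*} {M : ι → Type*} (F : Filter ι)
    (𝔸 : ∀ i : ι, PartialStructure L (M i)) :
    PartialStructure L (Quotient (filterSetoid F M)) where
  plus R := rpPlus F 𝔸 R
  minus R := (rpPlus F 𝔸 R ∪ rpZero F 𝔸 R)ᶜ
  disjoint R := by
    rw [Set.eq_empty_iff_forall_notMem]
    rintro x ⟨hp, hm⟩
    exact hm (Or.inl hp)

end PartialStructure


/-- characterization of when a direct product is total. -/
theorem directProduct_isTotal_iff {L : FirstOrder.Language.{u, v}}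
    {ι : Type*} [Nonempty ι] {M : ι → Type w} [∀ i, Nonempty (M i)]
    (𝔸 : ∀ i : ι, PartialStructure L (M i)) :
    (PartialStructure.directProduct 𝔸).IsTotal ↔
      ∀ {n : ℕ} (Z : L.Relations n),
        (∀ i, (𝔸 i).zero Z = ∅) ∨ ∃ k, (𝔸 k).plus Z ∪ (𝔸 k).zero Z = ∅ := by
  classical
  constructor
  · intro htot n Z
    by_contra hc
    push_neg at hc
    obtain ⟨⟨i0, hi0⟩, h2⟩ := hc
    have hs : ∀ i, ∃ t : Fin n → M i, t ∉ (𝔸 i).minus Z := by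
      intro i
      obtain ⟨t, ht⟩ := h2 i
      rcases ht with ht | ht
      · refine ⟨t, fun hm => ?_⟩
        have : t ∈ (𝔸 i).plus Z ∩ (𝔸 i).minus Z := ⟨ht, hm⟩
        rw [(𝔸 i).disjoint Z] at this; exact this
      · exact ⟨t, fun hm => ht (Or.inr hm)⟩
    choose s hsm using hs
    obtain ⟨t0, ht0⟩ := hi0
    set s' : ∀ i, Fin n → M i := Function.update s i0 t0 with hs'
    set H : Fin n → ∀ i, M i := fun k i => s' i k with hHdef
    have hH : H ∉ (PartialStructure.directProduct 𝔸).plus Z ∪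
        (PartialStructure.directProduct 𝔸).minus Z := by
      rintro (hp | ⟨i, hi⟩)
      · have h1 := hp i0
        have : (fun k => H k i0) = t0 := by
          funext k; simp [hHdef, hs', Function.update_self]
        rw [this] at h1
        exact ht0 (Or.inl h1)
      · by_cases h : i = i0
        · subst h
          have : (fun k => H k i) = t0 := by
            funext k; simp [hHdef, hs', Function.update_self]
          rw [this] at hi
          exact ht0 (Or.inr hi)
        · have : (fun k => H k i) = s i := by
            funext k; simp [hHdef, hs', Function.update_of_ne h]
          rw [this] at hi
          exact hsm i hi
    have : H ∈ (PartialStructure.directProduct 𝔸).zero Z := hH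
    rw [htot Z] at this
    exact this
  · intro hc n Z
    rw [Set.eq_empty_iff_forall_notMem]
    intro x hx
    apply hx
    rcases hc Z with h | ⟨k, hk⟩
    · by_cases hp : ∀ i, (fun j => x j i) ∈ (𝔸 i).plus Z
      · exact Or.inl hp
      · push_neg at hp
        obtain ⟨i, hi⟩ := hp
        refine Or.inr ⟨i, ?_⟩
        have hz := h i
        rw [PartialStructure.zero, Set.eq_empty_iff_forall_notMem] at hz
        have := hz (fun j => x j i)
        rw [Set.mem_compl_iff, not_not] at this
        rcases this with h' | h'
        · exact absurd h' hi
        · exact h'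
    · refine Or.inr ⟨k, ?_⟩
      have hnot : (fun j => x j k) ∉ (𝔸 k).plus Z ∪ (𝔸 k).zero Z := by
        rw [hk]; exact fun h => h
      by_contra hm
      exact hnot (Or.inr fun h' => hm (h'.elim (fun h'' => absurd h''
        (fun hpp => hnot (Or.inl hpp))) id))
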